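/- Let V₁, V₂ be primitive isometries on finite-dimensional spaces with the same noise space K, and suppose there exist a unitary U : H₂ → H₁ and c ∈ ℂ with |c| = 1 such that V₂ = c(U* ⊗ id_K)V₁U. Then V₂ is primitive, its stationary state is ρ_{ss,2} = U*ρ_{ss,1}U, and V₁ and V₂ have identical stationary output states at all times: tr_{H₁}[V₁(n)ρ_{ss,1}V₁(n)*] = tr_{H₂}[V₂(n)ρ_{ss,2}V₂(n)*] for all n ∈ ℕ. -/

import Mathlib

open Matrix Filter
open scoped Kronecker ComplexOrder

noncomputable section

/-- The action of `Φ ⊗ id_n` on block matrices, used to define complete positivity. -/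
def tensorId {a b : Type*} (Φ : Matrix a a ℂ → Matrix b b ℂ) (n : ℕ)
    (X : Matrix (a × Fin n) (a × Fin n) ℂ) : Matrix (b × Fin n) (b × Fin n) ℂ :=
  fun p q => Φ (fun i j => X (i, p.2) (j, q.2)) p.1 q.1

/-- A map between matrix algebras is completely positive if `Φ ⊗ id_n` preserves
positive semidefiniteness for every `n`. -/
def IsCompletelyPositive {a b : Type*} [Fintype a] [Fintype b]
    (Φ : Matrix a a ℂ → Matrix b b ℂ) : Prop :=
  ∀ (n : ℕ) (X : Matrix (a × Fin n) (a × Fin n) ℂ), X.PosSemidef → (tensorId Φ n X).PosSemidef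

/-- The map `X ↦ V₁* (X ⊗ 1_K) V₂` on `B(H₂, H₁)`, as a linear endomorphism.
For `V₁ = V₂ = V` this is the Heisenberg channel associated with the isometry `V`. -/
def sandwich {α β : Type*} [Fintype α] [Fintype β] {k : ℕ}
    (V₁ : Matrix (α × Fin k) α ℂ) (V₂ : Matrix (β × Fin k) β ℂ) :
    Module.End ℂ (Matrix α β ℂ) where
  toFun X := V₁ᴴ * (X ⊗ₖ (1 : Matrix (Fin k) (Fin k) ℂ)) * V₂
  map_add' X Y := by simp [Matrix.add_kronecker, Matrix.add_mul, Matrix.mul_add]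
  map_smul' c X := by simp [Matrix.smul_kronecker, Matrix.smul_mul, Matrix.mul_smul]

/-- The Kraus operators `K_i` of an isometry `V : H → H ⊗ K`,
defined by `K_i φ = (id ⊗ ⟨i|) V φ`. -/
def kraus {D k : ℕ} (V : Matrix (Fin D × Fin k) (Fin D) ℂ) (i : Fin k) :
    Matrix (Fin D) (Fin D) ℂ :=
  fun a b => V (a, i) b

/-- The `n`-step Kraus operator `K_{ι(n-1)} ⋯ K_{ι(0)}` associated with a word `ι`. -/
def krausString {D k : ℕ} (V : Matrix (Fin D × Fin k) (Fin D) ℂ) :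
    (n : ℕ) → (Fin n → Fin k) → Matrix (Fin D) (Fin D) ℂ
  | 0, _ => 1
  | n + 1, ι => kraus V (ι (Fin.last n)) * krausString V n (fun m => ι m.castSucc)

/-- The output state `tr_H [V(n) ρ V(n)*]` after `n` steps, a density matrix on `K^⊗n`. -/
def outputState {D k : ℕ} (V : Matrix (Fin D × Fin k) (Fin D) ℂ)
    (ρ : Matrix (Fin D) (Fin D) ℂ) (n : ℕ) :
    Matrix (Fin n → Fin k) (Fin n → Fin k) ℂ :=
  fun ι ι' => Matrix.trace (krausString V n ι * ρ * (krausString V n ι')ᴴ)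

/-- The Schrödinger (predual) transition map `ρ ↦ Σ_i K_i ρ K_i*`. -/
def schrodinger {D k : ℕ} (V : Matrix (Fin D × Fin k) (Fin D) ℂ)
    (ρ : Matrix (Fin D) (Fin D) ℂ) : Matrix (Fin D) (Fin D) ℂ :=
  ∑ i, kraus V i * ρ * (kraus V i)ᴴ

/-- A linear endomorphism of a matrix algebra is primitive if some power of it maps every
nonzero positive semidefinite matrix to a positive definite one. -/
def PrimitiveMap {α : Type*} [Fintype α] [DecidableEq α]
    (T : Module.End ℂ (Matrix α α ℂ)) : Prop :=
  ∃ n : ℕ, ∀ X : Matrix α α ℂ, X.PosSemidef → X ≠ 0 → ((T ^ n) X).PosDef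

/-- An isometry `V : H → H ⊗ K` is primitive if its channel `X ↦ V*(X ⊗ 1)V` is primitive. -/
def PrimitiveIso {D k : ℕ} (V : Matrix (Fin D × Fin k) (Fin D) ℂ) : Prop :=
  PrimitiveMap (sandwich V V)

/-- The pure state `|x⟩⟨x|` associated with a vector `x`. -/
def outer {α : Type*} (x : α → ℂ) : Matrix α α ℂ := Matrix.vecMulVec x (star x)

/-- The trace norm of a matrix: the trace of `√(A* A)`. -/
def traceNorm {α : Type*} [Fintype α] [DecidableEq α] (A : Matrix α α ℂ) : ℝ :=
  ((Matrix.posSemidef_conjTranspose_mul_self A).1.eigenvectorUnitary.1 *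
    Matrix.diagonal (((↑) : ℝ → ℂ) ∘ (Real.sqrt ·) ∘ (Matrix.posSemidef_conjTranspose_mul_self A).1.eigenvalues) *
    (star (Matrix.posSemidef_conjTranspose_mul_self A).1.eigenvectorUnitary : Matrix α α ℂ)).trace.re

/-- A quantum channel: a completely positive trace preserving linear map. -/
def IsCPTP {α β : Type*} [Fintype α] [Fintype β]
    (Φ : Matrix α α ℂ →ₗ[ℂ] Matrix β β ℂ) : Prop :=
  IsCompletelyPositive (Φ : Matrix α α ℂ → Matrix β β ℂ) ∧
    ∀ X : Matrix α α ℂ, (Φ X).trace = X.trace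

lemma kronOne_mul_kronOne {l m p : Type*} [Fintype l] [Fintype m] [Fintype p] {k : ℕ}
    (A : Matrix l m ℂ) (B : Matrix m p ℂ) :
    (A ⊗ₖ (1 : Matrix (Fin k) (Fin k) ℂ)) * (B ⊗ₖ (1 : Matrix (Fin k) (Fin k) ℂ))
      = (A * B) ⊗ₖ 1 := by
  rw [← Matrix.mul_kronecker_mul, Matrix.one_mul]


/-- If `V₂ = c (U* ⊗ 1) V₁ U` with `U` unitary and `|c| = 1`, then `V₂` is primitive,
`U* ρ_{ss,1} U` is its stationary state, and the stationary outputs of `V₁` and `V₂`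
coincide at all times. -/
theorem gauge_equivalent_isometries_same_output (D₁ D₂ k : ℕ)
    (V₁ : Matrix (Fin D₁ × Fin k) (Fin D₁) ℂ) (hV₁ : V₁ᴴ * V₁ = 1)
    (hPrim₁ : PrimitiveIso V₁)
    (ρ₁ : Matrix (Fin D₁) (Fin D₁) ℂ) (hρ₁pos : ρ₁.PosDef) (hρ₁tr : ρ₁.trace = 1)
    (hρ₁stat : schrodinger V₁ ρ₁ = ρ₁)
    (U : Matrix (Fin D₁) (Fin D₂) ℂ) (hU₁ : Uᴴ * U = 1) (hU₂ : U * Uᴴ = 1)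
    (c : ℂ) (hc : ‖c‖ = 1)
    (V₂ : Matrix (Fin D₂ × Fin k) (Fin D₂) ℂ)
    (hV₂ : V₂ = c • ((Uᴴ ⊗ₖ (1 : Matrix (Fin k) (Fin k) ℂ)) * V₁ * U)) :
    PrimitiveIso V₂ ∧
    (Uᴴ * ρ₁ * U).PosDef ∧ (Uᴴ * ρ₁ * U).trace = 1 ∧
    schrodinger V₂ (Uᴴ * ρ₁ * U) = Uᴴ * ρ₁ * U ∧
    ∀ n : ℕ, outputState V₁ ρ₁ n = outputState V₂ (Uᴴ * ρ₁ * U) n := by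
  -- scalar fact
  have hc2 : star c * c = 1 := by
    rw [Complex.star_def, ← Complex.normSq_eq_conj_mul_self, Complex.normSq_eq_norm_sq]
    norm_num [hc]
  have hc2' : c * star c = 1 := by rw [mul_comm]; exact hc2
  -- conjugation helpers
  have hconj2 : ∀ A B : Matrix (Fin D₁) (Fin D₁) ℂ,
      (Uᴴ * A * U) * (Uᴴ * B * U) = Uᴴ * (A * B) * U := by
    intro A B
    simp only [Matrix.mul_assoc]
    rw [← Matrix.mul_assoc U Uᴴ, hU₂, Matrix.one_mul]
  have hconj3 : ∀ A B C : Matrix (Fin D₁) (Fin D₁) ℂ,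
      (Uᴴ * A * U) * (Uᴴ * B * U) * (Uᴴ * C * U) = Uᴴ * (A * B * C) * U := by
    intro A B C; rw [hconj2, hconj2]
  have hUXU : ∀ X : Matrix (Fin D₂) (Fin D₂) ℂ, Uᴴ * (U * X * Uᴴ) * U = X := by
    intro X
    simp only [Matrix.mul_assoc]
    rw [hU₁, Matrix.mul_one, ← Matrix.mul_assoc, hU₁, Matrix.one_mul]
  have hUXU' : ∀ Y : Matrix (Fin D₁) (Fin D₁) ℂ, U * (Uᴴ * Y * U) * Uᴴ = Y := by
    intro Y
    simp only [Matrix.mul_assoc]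
    rw [hU₂, Matrix.mul_one, ← Matrix.mul_assoc, hU₂, Matrix.one_mul]
  -- kraus operators
  have hK : ∀ i, kraus V₂ i = c • (Uᴴ * kraus V₁ i * U) := by
    intro i
    ext a b
    simp only [hV₂, kraus, Matrix.smul_apply, Matrix.mul_apply, Fintype.sum_prod_type,
      Matrix.kroneckerMap_apply, Matrix.one_apply, mul_ite, mul_one, mul_zero,
      ite_mul, zero_mul, Finset.sum_ite_eq, Finset.mem_univ, if_true]
  have hKH : ∀ i, (kraus V₂ i)ᴴ = star c • (Uᴴ * (kraus V₁ i)ᴴ * U) := by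
    intro i
    rw [hK]
    simp [Matrix.conjTranspose_smul, Matrix.conjTranspose_mul, Matrix.mul_assoc]
  -- kraus strings
  have hKS : ∀ n (ι : Fin n → Fin k),
      krausString V₂ n ι = (c ^ n) • (Uᴴ * krausString V₁ n ι * U) := by
    intro n
    induction n with
    | zero => intro ι; simp [krausString, hU₁]
    | succ n ih =>
      intro ι
      rw [krausString, krausString, hK, ih, Matrix.smul_mul, Matrix.mul_smul,
        smul_smul, hconj2, ← pow_succ']
  have hKSH : ∀ n (ι : Fin n → Fin k),
      (krausString V₂ n ι)ᴴ = (star c ^ n) • (Uᴴ * (krausString V₁ n ι)ᴴ * U) := by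
    intro n ι
    rw [hKS]
    simp [Matrix.conjTranspose_smul, Matrix.conjTranspose_mul, Matrix.mul_assoc]
  -- PosDef under conjugation
  have hUvec : ∀ x : Fin D₂ → ℂ, x ≠ 0 → U *ᵥ x ≠ 0 := by
    intro x hx h
    apply hx
    have : Uᴴ *ᵥ (U *ᵥ x) = x := by rw [Matrix.mulVec_mulVec, hU₁, Matrix.one_mulVec]
    rw [h, Matrix.mulVec_zero] at this
    exact this.symm
  have hPD : ∀ Y : Matrix (Fin D₁) (Fin D₁) ℂ, Y.PosDef → (Uᴴ * Y * U).PosDef := by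
    intro Y hY
    refine Matrix.PosDef.of_dotProduct_mulVec_pos (Matrix.isHermitian_conjTranspose_mul_mul U hY.1) ?_
    intro x hx
    have h1 : (Uᴴ * Y * U) *ᵥ x = Uᴴ *ᵥ (Y *ᵥ (U *ᵥ x)) := by
      rw [Matrix.mulVec_mulVec, Matrix.mulVec_mulVec, Matrix.mul_assoc]
    rw [h1, Matrix.dotProduct_mulVec, ← Matrix.star_mulVec]
    exact hY.dotProduct_mulVec_pos (hUvec x hx)
  -- heisenberg channel
  have hT : ∀ X : Matrix (Fin D₂) (Fin D₂) ℂ,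
      sandwich V₂ V₂ X = Uᴴ * (sandwich V₁ V₁ (U * X * Uᴴ)) * U := by
    intro X
    simp only [sandwich, LinearMap.coe_mk, AddHom.coe_mk, hV₂, Matrix.conjTranspose_smul,
      Matrix.conjTranspose_mul, Matrix.conjTranspose_conjTranspose]
    have hkronH : (Uᴴ ⊗ₖ (1 : Matrix (Fin k) (Fin k) ℂ))ᴴ = U ⊗ₖ 1 := by
      ext ⟨a, i⟩ ⟨b, j⟩
      simp only [Matrix.conjTranspose_apply, Matrix.kroneckerMap_apply, Matrix.one_apply]
      by_cases h : i = j
      · subst h; simp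
      · simp [h, Ne.symm h]
    rw [hkronH]
    rw [Matrix.smul_mul, Matrix.smul_mul, Matrix.mul_smul, smul_smul, hc2, one_smul]
    simp only [Matrix.mul_assoc]
    rw [← Matrix.mul_assoc (X ⊗ₖ (1 : Matrix (Fin k) (Fin k) ℂ)) (Uᴴ ⊗ₖ 1) (V₁ * U),
      kronOne_mul_kronOne X Uᴴ,
      ← Matrix.mul_assoc (U ⊗ₖ (1 : Matrix (Fin k) (Fin k) ℂ)) ((X * Uᴴ) ⊗ₖ 1) (V₁ * U),
      kronOne_mul_kronOne U (X * Uᴴ)]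
  have hTn : ∀ (n : ℕ) (X : Matrix (Fin D₂) (Fin D₂) ℂ),
      ((sandwich V₂ V₂) ^ n) X = Uᴴ * (((sandwich V₁ V₁) ^ n) (U * X * Uᴴ)) * U := by
    intro n
    induction n with
    | zero =>
      intro X
      simp only [pow_zero, Module.End.one_apply]
      rw [hUXU]
    | succ n ih =>
      intro X
      rw [pow_succ', pow_succ', Module.End.mul_apply, Module.End.mul_apply, ih, hT, hUXU']
  -- assemble
  refine ⟨?_, hPD ρ₁ hρ₁pos, ?_, ?_, ?_⟩
  · obtain ⟨n, hn⟩ := hPrim₁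
    refine ⟨n, fun X hX hX0 => ?_⟩
    rw [hTn]
    apply hPD
    apply hn
    · have := hX.conjTranspose_mul_mul_same Uᴴ
      simpa using this
    · intro h
      apply hX0
      have := hUXU X
      rw [h, Matrix.mul_zero, Matrix.zero_mul] at this
      exact this.symm
  · rw [Matrix.trace_mul_cycle, hU₂, Matrix.one_mul, hρ₁tr]
  · unfold schrodinger
    have : ∀ i : Fin k, kraus V₂ i * (Uᴴ * ρ₁ * U) * (kraus V₂ i)ᴴ
        = Uᴴ * (kraus V₁ i * ρ₁ * (kraus V₁ i)ᴴ) * U := by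
      intro i
      rw [hKH, hK]
      simp only [Matrix.smul_mul, Matrix.mul_smul, smul_smul, hc2, hc2', one_smul]
      rw [hconj3]
    simp only [this]
    rw [← Matrix.sum_mul, ← Matrix.mul_sum,
      show (∑ i, kraus V₁ i * ρ₁ * (kraus V₁ i)ᴴ) = schrodinger V₁ ρ₁ from rfl, hρ₁stat]
  · intro n
    ext ι ι'
    simp only [outputState]
    have hcp : c ^ n * star c ^ n = 1 := by rw [← mul_pow, hc2', one_pow]
    have hcp' : star c ^ n * c ^ n = 1 := by rw [← mul_pow, hc2, one_pow]
    rw [hKSH n ι', hKS n ι]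
    simp only [Matrix.smul_mul, Matrix.mul_smul, smul_smul, hcp, hcp', one_smul]
    rw [hconj3, Matrix.trace_mul_cycle Uᴴ _ U, hU₂, Matrix.one_mul]
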